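/- Let X be a real random variable taking values in [a, b] (a ≤ b), and U, V random elements of a common measurable space, all defined on a common probability space. If the total variation distance between the law of (X, U) and the law of (X, V) is at most ε, then for every 1-Lipschitz function h : ℝ → ℝ, | E[ h(E[X | σ(U)]) ] − E[ h(E[X | σ(V)]) ] | ≤ 3 (b − a) ε. -/

import Mathlib

open MeasureTheory

/-- Total variation distance between two measures:
`sup_{A measurable} |μ(A) − ν(A)|`. -/
noncomputable def tvDist {𝒴 : Type*} [MeasurableSpace 𝒴] (μ ν : Measure 𝒴) : ℝ :=
  ⨆ A : {A : Set 𝒴 // MeasurableSet A}, |(μ A.1).toReal - (ν A.1).toReal|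

lemma aux_int {α : Type*} [MeasurableSpace α] {μ : Measure α} [IsFiniteMeasure μ] {g : α → ℝ}
    (hg : AEStronglyMeasurable g μ) {M : ℝ} (hb : ∀ z, |g z| ≤ M) : Integrable g μ :=
  Integrable.mono' (integrable_const M) hg (Filter.Eventually.of_forall fun z => by
    simpa [Real.norm_eq_abs] using hb z)

lemma tv_le {α : Type*} [MeasurableSpace α] (μ ν : Measure α) [IsProbabilityMeasure μ]
    [IsProbabilityMeasure ν] {A : Set α} (hA : MeasurableSet A) :
    |(μ A).toReal - (ν A).toReal| ≤ tvDist μ ν := by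
  have hbdd : BddAbove (Set.range fun A : {A : Set α // MeasurableSet A} =>
      |(μ A.1).toReal - (ν A.1).toReal|) := by
    refine ⟨1, ?_⟩
    rintro x ⟨B, rfl⟩
    have h1 : (μ B.1).toReal ≤ 1 := by
      simpa using ENNReal.toReal_mono (by simp) (prob_le_one (μ := μ) (s := B.1))
    have h2 : (ν B.1).toReal ≤ 1 := by
      simpa using ENNReal.toReal_mono (by simp) (prob_le_one (μ := ν) (s := B.1))
    have h3 : 0 ≤ (μ B.1).toReal := ENNReal.toReal_nonneg
    have h4 : 0 ≤ (ν B.1).toReal := ENNReal.toReal_nonneg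
    rw [abs_sub_le_iff]; constructor <;> linarith
  exact le_ciSup hbdd ⟨A, hA⟩

open Set in
lemma tv_integral_bound {α : Type*} [MeasurableSpace α] (μ ν : Measure α) [IsProbabilityMeasure μ]
    [IsProbabilityMeasure ν] {g : α → ℝ} (hg : Measurable g) {M : ℝ} (hM : 0 ≤ M)
    (hb : ∀ z, |g z| ≤ M) :
    |∫ z, g z ∂μ - ∫ z, g z ∂ν| ≤ 2 * M * tvDist μ ν := by
  set g' : α → ℝ := fun z => g z + M with hg'def
  have hg'm : Measurable g' := hg.add_const M
  have hbd : ∀ z, |g' z| ≤ 2 * M := fun z => by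
    have := hb z; rw [abs_le] at this ⊢; constructor <;> simp [hg'def] <;> linarith [this.1, this.2]
  have hnn : ∀ z, 0 ≤ g' z := fun z => by have := (abs_le.mp (hb z)).1; simp [hg'def]; linarith
  have hub : ∀ z, g' z ≤ 2 * M := fun z => by have := (abs_le.mp (hb z)).2; simp [hg'def]; linarith
  have hintμ : Integrable g' μ := aux_int hg'm.aestronglyMeasurable hbd
  have hintν : Integrable g' ν := aux_int hg'm.aestronglyMeasurable hbd
  set F : ℝ → ℝ := fun t => (μ {a | t ≤ g' a}).toReal with hF
  set G : ℝ → ℝ := fun t => (ν {a | t ≤ g' a}).toReal with hG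
  have keyμ : ∫ z, g' z ∂μ = ∫ t in Ioc 0 (2*M), F t :=
    hintμ.integral_eq_integral_Ioc_meas_le (Filter.Eventually.of_forall hnn)
      (Filter.Eventually.of_forall hub)
  have keyν : ∫ z, g' z ∂ν = ∫ t in Ioc 0 (2*M), G t :=
    hintν.integral_eq_integral_Ioc_meas_le (Filter.Eventually.of_forall hnn)
      (Filter.Eventually.of_forall hub)
  have hFm : Measurable F := by
    have : Antitone fun t => μ {a | t ≤ g' a} := fun s t hst =>
      measure_mono fun a ha => le_trans hst ha
    exact this.measurable.ennreal_toReal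
  have hGm : Measurable G := by
    have : Antitone fun t => ν {a | t ≤ g' a} := fun s t hst =>
      measure_mono fun a ha => le_trans hst ha
    exact this.measurable.ennreal_toReal
  have hFb : ∀ t, |F t| ≤ 1 := fun t => by
    rw [abs_of_nonneg ENNReal.toReal_nonneg]
    simpa using ENNReal.toReal_mono (by simp) (prob_le_one (μ := μ) (s := {a | t ≤ g' a}))
  have hGb : ∀ t, |G t| ≤ 1 := fun t => by
    rw [abs_of_nonneg ENNReal.toReal_nonneg]
    simpa using ENNReal.toReal_mono (by simp) (prob_le_one (μ := ν) (s := {a | t ≤ g' a}))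
  haveI : IsFiniteMeasure (volume.restrict (Ioc (0:ℝ) (2*M))) :=
    ⟨by simp [lt_top_iff_ne_top, ENNReal.mul_eq_top]⟩
  have hFint : Integrable F (volume.restrict (Ioc 0 (2*M))) :=
    aux_int hFm.aestronglyMeasurable hFb
  have hGint : Integrable G (volume.restrict (Ioc 0 (2*M))) :=
    aux_int hGm.aestronglyMeasurable hGb
  have hdiff : ∫ z, g z ∂μ - ∫ z, g z ∂ν = ∫ t in Ioc 0 (2*M), (F t - G t) := by
    have h1 : ∫ z, g' z ∂μ = ∫ z, g z ∂μ + M := by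
      rw [hg'def]; rw [integral_add (aux_int hg.aestronglyMeasurable hb) (integrable_const M)]
      simp
    have h2 : ∫ z, g' z ∂ν = ∫ z, g z ∂ν + M := by
      rw [hg'def]; rw [integral_add (aux_int hg.aestronglyMeasurable hb) (integrable_const M)]
      simp
    rw [integral_sub hFint hGint, ← keyμ, ← keyν, h1, h2]; ring
  rw [hdiff]
  have hptwise : ∀ t, |F t - G t| ≤ tvDist μ ν := fun t =>
    tv_le μ ν (hg'm measurableSet_Ici : MeasurableSet {a | t ≤ g' a})
  calc |∫ t in Ioc 0 (2*M), (F t - G t)|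
      ≤ ∫ t in Ioc 0 (2*M), |F t - G t| := by
        simpa [Real.norm_eq_abs] using
          norm_integral_le_integral_norm (μ := volume.restrict (Ioc 0 (2*M))) (f := fun t => F t - G t)
    _ ≤ ∫ _t in Ioc 0 (2*M), tvDist μ ν := by
        refine integral_mono (hFint.sub hGint).abs (integrable_const _) fun t => hptwise t
    _ = 2 * M * tvDist μ ν := by
        rw [setIntegral_const]
        simp [Real.volume_Ioc, ENNReal.toReal_ofReal (by linarith : (0:ℝ) ≤ 2*M), hM]
        try ring

lemma split_int {α : Type*} [MeasurableSpace α] (ν : Measure α) {g s : α → ℝ}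
    (hg : Integrable g ν) {S : Set α} (hS : MeasurableSet S)
    (hs1 : ∀ z ∈ S, s z = 1) (hs2 : ∀ z ∉ S, s z = -1) :
    ∫ z, s z * g z ∂ν = (∫ z in S, g z ∂ν) - ∫ z in Sᶜ, g z ∂ν := by
  have hfun : (fun z => s z * g z)
      = fun z => S.indicator g z - Sᶜ.indicator g z := by
    funext z
    by_cases hz : z ∈ S
    · simp [Set.indicator, hz, hs1 z hz]
    · simp [Set.indicator, hz, hs2 z hz]
  rw [hfun, integral_sub (hg.indicator hS) (hg.indicator hS.compl),
    integral_indicator hS, integral_indicator hS.compl]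

lemma rep_lemma {Ω 𝒴 : Type*} [MeasurableSpace Ω] [m𝒴 : MeasurableSpace 𝒴]
    (ℙ : Measure Ω) [IsProbabilityMeasure ℙ]
    (a b : ℝ) (hab : a ≤ b)
    (X : Ω → ℝ) (hX : Measurable X) (hXab : ∀ ω, X ω ∈ Set.Icc a b)
    (U : Ω → 𝒴) (hU : Measurable U) :
    ∃ φ : 𝒴 → ℝ, Measurable φ ∧ (∀ y, φ y ∈ Set.Icc a b) ∧
      (fun ω => φ (U ω)) =ᵐ[ℙ] ℙ[X | MeasurableSpace.comap U m𝒴] := by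
  have hXbd : ∀ ω, |X ω| ≤ |a| + |b| := fun ω => by
    have h1 := (hXab ω).1; have h2 := (hXab ω).2
    have := neg_abs_le a; have := le_abs_self b
    rw [abs_le]; constructor <;> linarith [abs_nonneg a, abs_nonneg b]
  have hXint : Integrable X ℙ := aux_int hX.aestronglyMeasurable hXbd
  have hae :
      ℙ[X | m𝒴.comap U] =ᵐ[ℙ] fun ω => ∫ x, x ∂(ProbabilityTheory.condDistrib X U ℙ (U ω)) :=
    ProbabilityTheory.condExp_ae_eq_integral_condDistrib' hU hXint
  set φ₁ : 𝒴 → ℝ := fun y => ∫ x, x ∂(ProbabilityTheory.condDistrib X U ℙ y) with hφ₁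
  have hsnd_int : Integrable (fun p : 𝒴 × ℝ => p.2) (ℙ.map fun ω => (U ω, X ω)) := by
    rw [integrable_map_measure measurable_snd.aestronglyMeasurable
      (hU.prodMk hX).aemeasurable]
    exact hXint
  have hφint : Integrable φ₁ (ℙ.map U) :=
    MeasureTheory.Integrable.integral_condDistrib_map hX.aemeasurable hsnd_int
  set φ₀ : 𝒴 → ℝ := hφint.1.mk φ₁ with hφ₀def
  have hφ₀m : Measurable φ₀ := hφint.1.stronglyMeasurable_mk.measurable
  have heq : φ₁ =ᵐ[ℙ.map U] φ₀ := hφint.1.ae_eq_mk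
  have heq' : (fun ω => φ₁ (U ω)) =ᵐ[ℙ] fun ω => φ₀ (U ω) :=
    ae_of_ae_map hU.aemeasurable heq
  -- conditional expectation bounds
  have hm : m𝒴.comap U ≤ ‹MeasurableSpace Ω› := hU.comap_le
  have hle_b : ℙ[X | m𝒴.comap U] ≤ᵐ[ℙ] fun _ => b := by
    have h1 : ℙ[X | m𝒴.comap U] ≤ᵐ[ℙ] ℙ[(fun _ => b) | m𝒴.comap U] :=
      condExp_mono hXint (integrable_const b)
        (Filter.Eventually.of_forall fun ω => (hXab ω).2)
    have h2 : ℙ[(fun _ => b) | m𝒴.comap U] = fun _ => b := condExp_const hm b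
    rw [h2] at h1; exact h1
  have hle_a : (fun _ic => a) ≤ᵐ[ℙ] ℙ[X | m𝒴.comap U] := by
    have h1 : ℙ[(fun _ => a) | m𝒴.comap U] ≤ᵐ[ℙ] ℙ[X | m𝒴.comap U] :=
      condExp_mono (integrable_const a) hXint
        (Filter.Eventually.of_forall fun ω => (hXab ω).1)
    have h2 : ℙ[(fun _ => a) | m𝒴.comap U] = fun _ => a := condExp_const hm a
    rw [h2] at h1; exact h1
  refine ⟨fun y => max a (min b (φ₀ y)),
    measurable_const.max (measurable_const.min hφ₀m), fun y => ?_, ?_⟩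
  · constructor
    · exact le_max_left _ _
    · exact max_le hab (min_le_left _ _)
  · filter_upwards [hae, heq', hle_b, hle_a] with ω h1 h2 h3 h4
    have hkey : φ₀ (U ω) = (ℙ[X | m𝒴.comap U]) ω := (h2.symm.trans h1.symm :)
    rw [hkey, min_eq_right h3, max_eq_right h4]

/-- for a real random variable `X` with values in `[a,b]` and random
elements `U, V` of a common measurable space, if `d_TV(law(X,U), law(X,V)) ≤ ε`,
then for every 1-Lipschitz `h : ℝ → ℝ`,
`|E[h(E[X|σ(U)])] − E[h(E[X|σ(V)])]| ≤ 3(b − a)ε`. -/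
theorem stmt14
    {Ω 𝒴 : Type*} [MeasurableSpace Ω] [m𝒴 : MeasurableSpace 𝒴]
    (ℙ : Measure Ω) [IsProbabilityMeasure ℙ]
    (a b : ℝ) (hab : a ≤ b)
    (X : Ω → ℝ) (hX : Measurable X) (hXab : ∀ ω, X ω ∈ Set.Icc a b)
    (U V : Ω → 𝒴) (hU : Measurable U) (hV : Measurable V)
    (ε : ℝ) (hε : 0 ≤ ε)
    (htv : tvDist (Measure.map (fun ω => (X ω, U ω)) ℙ)
                  (Measure.map (fun ω => (X ω, V ω)) ℙ) ≤ ε)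
    (h : ℝ → ℝ) (hLip : LipschitzWith 1 h) :
    |(∫ ω, h ((ℙ[X | MeasurableSpace.comap U m𝒴]) ω) ∂ℙ)
        - ∫ ω, h ((ℙ[X | MeasurableSpace.comap V m𝒴]) ω) ∂ℙ|
      ≤ 3 * (b - a) * ε := by
  obtain ⟨φ, hφm, hφab, hφae⟩ := rep_lemma ℙ a b hab X hX hXab U hU
  obtain ⟨ψ, hψm, hψab, hψae⟩ := rep_lemma ℙ a b hab X hX hXab V hV
  set μ : Measure (ℝ × 𝒴) := Measure.map (fun ω => (X ω, U ω)) ℙ with hμdef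
  set ν : Measure (ℝ × 𝒴) := Measure.map (fun ω => (X ω, V ω)) ℙ with hνdef
  haveI hμprob : IsProbabilityMeasure μ :=
    Measure.isProbabilityMeasure_map (hX.prodMk hU).aemeasurable
  haveI hνprob : IsProbabilityMeasure ν :=
    Measure.isProbabilityMeasure_map (hX.prodMk hV).aemeasurable
  set D : ℝ := tvDist μ ν with hDdef
  set c₀ : ℝ := (a + b) / 2 with hc₀
  set clamp : ℝ → ℝ := fun x => max a (min b x) with hclampdef
  have hclampm : Measurable clamp := measurable_const.max (measurable_const.min measurable_id)
  have hclampab : ∀ x, clamp x ∈ Set.Icc a b := fun x =>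
    ⟨le_max_left _ _, max_le hab (min_le_left _ _)⟩
  have hclampX : ∀ ω, clamp (X ω) = X ω := fun ω => by
    show max a (min b (X ω)) = X ω
    rw [min_eq_right (hXab ω).2, max_eq_right (hXab ω).1]
  have hhm : Measurable h := hLip.continuous.measurable
  have hXbd : ∀ ω, |X ω| ≤ |a| + |b| := fun ω => by
    have h1 := (hXab ω).1; have h2 := (hXab ω).2
    have := neg_abs_le a; have := le_abs_self b
    rw [abs_le]; constructor <;> linarith [abs_nonneg a, abs_nonneg b]
  have hXint : Integrable X ℙ := aux_int hX.aestronglyMeasurable hXbd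
  have habs_ab : ∀ x ∈ Set.Icc a b, |x| ≤ |a| + |b| := fun x hx => by
    rw [abs_le]
    constructor <;>
      linarith [neg_abs_le a, le_abs_self b, abs_nonneg a, abs_nonneg b, hx.1, hx.2]
  have hmid : ∀ x ∈ Set.Icc a b, |x - c₀| ≤ (b - a) / 2 := fun x hx => by
    rw [abs_le, hc₀]; constructor <;> [linarith [hx.1]; linarith [hx.2]]
  have hLipAbs : ∀ x y : ℝ, |h x - h y| ≤ |x - y| := fun x y => by
    have := hLip.dist_le_mul x y
    rwa [Real.dist_eq, Real.dist_eq, NNReal.coe_one, one_mul] at this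
  -- transfer the two integrals to the joint laws
  have hsmφ : AEStronglyMeasurable (fun z : ℝ × 𝒴 => h (φ z.2)) μ :=
    (hhm.comp (hφm.comp measurable_snd)).aestronglyMeasurable
  have hsmψ : AEStronglyMeasurable (fun z : ℝ × 𝒴 => h (ψ z.2)) ν :=
    (hhm.comp (hψm.comp measurable_snd)).aestronglyMeasurable
  have hI1 : ∫ ω, h ((ℙ[X | MeasurableSpace.comap U m𝒴]) ω) ∂ℙ
      = ∫ z : ℝ × 𝒴, h (φ z.2) ∂μ := by
    have e1 : ∫ ω, h ((ℙ[X | MeasurableSpace.comap U m𝒴]) ω) ∂ℙ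
        = ∫ ω, h (φ (U ω)) ∂ℙ :=
      integral_congr_ae (hφae.symm.fun_comp h)
    have e2 : ∫ z : ℝ × 𝒴, h (φ z.2) ∂μ = ∫ ω, h (φ (U ω)) ∂ℙ := by
      rw [hμdef]; exact integral_map (hX.prodMk hU).aemeasurable hsmφ
    rw [e1, ← e2]
  have hI2 : ∫ ω, h ((ℙ[X | MeasurableSpace.comap V m𝒴]) ω) ∂ℙ
      = ∫ z : ℝ × 𝒴, h (ψ z.2) ∂ν := by
    have e1 : ∫ ω, h ((ℙ[X | MeasurableSpace.comap V m𝒴]) ω) ∂ℙ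
        = ∫ ω, h (ψ (V ω)) ∂ℙ :=
      integral_congr_ae (hψae.symm.fun_comp h)
    have e2 : ∫ z : ℝ × 𝒴, h (ψ z.2) ∂ν = ∫ ω, h (ψ (V ω)) ∂ℙ := by
      rw [hνdef]; exact integral_map (hX.prodMk hV).aemeasurable hsmψ
    rw [e1, ← e2]
  -- the conditional-expectation property transported to the joint laws
  have hPμ : ∀ B : Set 𝒴, MeasurableSet B →
      (∫ z in Prod.snd ⁻¹' B, φ z.2 ∂μ) = ∫ z in Prod.snd ⁻¹' B, clamp z.1 ∂μ := by
    intro B hB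
    have hpre : MeasurableSet (Prod.snd ⁻¹' B : Set (ℝ × 𝒴)) := measurable_snd hB
    have hpreU : MeasurableSet (U ⁻¹' B) := hU hB
    have e1 : ∫ z in Prod.snd ⁻¹' B, φ z.2 ∂μ = ∫ ω in U ⁻¹' B, φ (U ω) ∂ℙ := by
      rw [hμdef]
      exact setIntegral_map hpre (hφm.comp measurable_snd).aestronglyMeasurable
        (hX.prodMk hU).aemeasurable
    have e2 : ∫ ω in U ⁻¹' B, φ (U ω) ∂ℙ
        = ∫ ω in U ⁻¹' B, (ℙ[X | MeasurableSpace.comap U m𝒴]) ω ∂ℙ :=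
      setIntegral_congr_ae hpreU (hφae.mono fun ω hω _ => hω)
    have e3 : ∫ ω in U ⁻¹' B, (ℙ[X | MeasurableSpace.comap U m𝒴]) ω ∂ℙ
        = ∫ ω in U ⁻¹' B, X ω ∂ℙ :=
      setIntegral_condExp hU.comap_le hXint ⟨B, hB, rfl⟩
    have e4 : ∫ z in Prod.snd ⁻¹' B, clamp z.1 ∂μ = ∫ ω in U ⁻¹' B, clamp (X ω) ∂ℙ := by
      rw [hμdef]
      exact setIntegral_map hpre (hclampm.comp measurable_fst).aestronglyMeasurable
        (hX.prodMk hU).aemeasurable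
    have e5 : ∫ ω in U ⁻¹' B, clamp (X ω) ∂ℙ = ∫ ω in U ⁻¹' B, X ω ∂ℙ :=
      setIntegral_congr_ae hpreU (Filter.Eventually.of_forall fun ω _ => hclampX ω)
    rw [e1, e2, e3, e4, e5]
  have hPν : ∀ B : Set 𝒴, MeasurableSet B →
      (∫ z in Prod.snd ⁻¹' B, ψ z.2 ∂ν) = ∫ z in Prod.snd ⁻¹' B, clamp z.1 ∂ν := by
    intro B hB
    have hpre : MeasurableSet (Prod.snd ⁻¹' B : Set (ℝ × 𝒴)) := measurable_snd hB
    have hpreV : MeasurableSet (V ⁻¹' B) := hV hB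
    have e1 : ∫ z in Prod.snd ⁻¹' B, ψ z.2 ∂ν = ∫ ω in V ⁻¹' B, ψ (V ω) ∂ℙ := by
      rw [hνdef]
      exact setIntegral_map hpre (hψm.comp measurable_snd).aestronglyMeasurable
        (hX.prodMk hV).aemeasurable
    have e2 : ∫ ω in V ⁻¹' B, ψ (V ω) ∂ℙ
        = ∫ ω in V ⁻¹' B, (ℙ[X | MeasurableSpace.comap V m𝒴]) ω ∂ℙ :=
      setIntegral_congr_ae hpreV (hψae.mono fun ω hω _ => hω)
    have e3 : ∫ ω in V ⁻¹' B, (ℙ[X | MeasurableSpace.comap V m𝒴]) ω ∂ℙ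
        = ∫ ω in V ⁻¹' B, X ω ∂ℙ :=
      setIntegral_condExp hV.comap_le hXint ⟨B, hB, rfl⟩
    have e4 : ∫ z in Prod.snd ⁻¹' B, clamp z.1 ∂ν = ∫ ω in V ⁻¹' B, clamp (X ω) ∂ℙ := by
      rw [hνdef]
      exact setIntegral_map hpre (hclampm.comp measurable_fst).aestronglyMeasurable
        (hX.prodMk hV).aemeasurable
    have e5 : ∫ ω in V ⁻¹' B, clamp (X ω) ∂ℙ = ∫ ω in V ⁻¹' B, X ω ∂ℙ :=
      setIntegral_congr_ae hpreV (Filter.Eventually.of_forall fun ω _ => hclampX ω)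
    rw [e1, e2, e3, e4, e5]
  -- sign function on the product space
  set A : Set 𝒴 := {y | ψ y ≤ φ y} with hAdef
  have hA : MeasurableSet A := measurableSet_le hψm hφm
  set S : Set (ℝ × 𝒴) := Prod.snd ⁻¹' A with hSdef
  have hS : MeasurableSet S := measurable_snd hA
  set s : (ℝ × 𝒴) → ℝ :=
    fun z => S.indicator (fun _ => (1:ℝ)) z - Sᶜ.indicator (fun _ => (1:ℝ)) z with hsdef
  have hs1 : ∀ z ∈ S, s z = 1 := fun z hz => by
    show S.indicator (fun _ => (1:ℝ)) z - Sᶜ.indicator (fun _ => (1:ℝ)) z = 1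
    rw [Set.indicator_of_mem hz, Set.indicator_of_notMem (by simpa using hz)]
    ring
  have hs2 : ∀ z ∉ S, s z = -1 := fun z hz => by
    show S.indicator (fun _ => (1:ℝ)) z - Sᶜ.indicator (fun _ => (1:ℝ)) z = -1
    rw [Set.indicator_of_notMem hz, Set.indicator_of_mem (Set.mem_compl hz)]
    ring
  have hsm : Measurable s :=
    (measurable_const.indicator hS).sub (measurable_const.indicator hS.compl)
  have hsabs : ∀ z, |s z| ≤ 1 := fun z => by
    by_cases hz : z ∈ S
    · rw [hs1 z hz]; norm_num
    · rw [hs2 z hz]; norm_num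
  -- the functions entering the bounds
  set q1 : (ℝ × 𝒴) → ℝ := fun z => h (φ z.2) - h c₀ with hq1def
  set q2 : (ℝ × 𝒴) → ℝ := fun z => h (ψ z.2) - h c₀ with hq2def
  set r1 : (ℝ × 𝒴) → ℝ := fun z => φ z.2 - c₀ with hr1def
  set r2 : (ℝ × 𝒴) → ℝ := fun z => ψ z.2 - c₀ with hr2def
  set p : (ℝ × 𝒴) → ℝ := fun z => clamp z.1 - c₀ with hpdef
  have hq1m : Measurable q1 := (hhm.comp (hφm.comp measurable_snd)).sub measurable_const
  have hq2m : Measurable q2 := (hhm.comp (hψm.comp measurable_snd)).sub measurable_const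
  have hr1m : Measurable r1 := (hφm.comp measurable_snd).sub measurable_const
  have hr2m : Measurable r2 := (hψm.comp measurable_snd).sub measurable_const
  have hpm : Measurable p := (hclampm.comp measurable_fst).sub measurable_const
  have hq1b : ∀ z, |q1 z| ≤ (b - a) / 2 := fun z =>
    le_trans (hLipAbs _ _) (hmid _ (hφab z.2))
  have hq2b : ∀ z, |q2 z| ≤ (b - a) / 2 := fun z =>
    le_trans (hLipAbs _ _) (hmid _ (hψab z.2))
  have hr1b : ∀ z, |r1 z| ≤ (b - a) / 2 := fun z => hmid _ (hφab z.2)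
  have hr2b : ∀ z, |r2 z| ≤ (b - a) / 2 := fun z => hmid _ (hψab z.2)
  have hpb : ∀ z, |p z| ≤ (b - a) / 2 := fun z => hmid _ (hclampab z.1)
  have hsr1b : ∀ z, |s z * r1 z| ≤ (b - a) / 2 := fun z => by
    rw [abs_mul]
    calc |s z| * |r1 z| ≤ 1 * ((b - a) / 2) :=
          mul_le_mul (hsabs z) (hr1b z) (abs_nonneg _) zero_le_one
      _ = (b - a) / 2 := one_mul _
  have hsr2b : ∀ z, |s z * r2 z| ≤ (b - a) / 2 := fun z => by
    rw [abs_mul]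
    calc |s z| * |r2 z| ≤ 1 * ((b - a) / 2) :=
          mul_le_mul (hsabs z) (hr2b z) (abs_nonneg _) zero_le_one
      _ = (b - a) / 2 := one_mul _
  have hspb : ∀ z, |s z * p z| ≤ (b - a) / 2 := fun z => by
    rw [abs_mul]
    calc |s z| * |p z| ≤ 1 * ((b - a) / 2) :=
          mul_le_mul (hsabs z) (hpb z) (abs_nonneg _) zero_le_one
      _ = (b - a) / 2 := one_mul _
  -- integrability
  have hq1intμ : Integrable q1 μ := aux_int hq1m.aestronglyMeasurable hq1b
  have hq1intν : Integrable q1 ν := aux_int hq1m.aestronglyMeasurable hq1b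
  have hq2intν : Integrable q2 ν := aux_int hq2m.aestronglyMeasurable hq2b
  have hr1intμ : Integrable r1 μ := aux_int hr1m.aestronglyMeasurable hr1b
  have hpintμ : Integrable p μ := aux_int hpm.aestronglyMeasurable hpb
  have hpintν : Integrable p ν := aux_int hpm.aestronglyMeasurable hpb
  have hr2intν : Integrable r2 ν := aux_int hr2m.aestronglyMeasurable hr2b
  have hsr1m : Measurable fun z => s z * r1 z := hsm.mul hr1m
  have hsr2m : Measurable fun z => s z * r2 z := hsm.mul hr2m
  have hspm' : Measurable fun z => s z * p z := hsm.mul hpm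
  have hsr1intμ : Integrable (fun z => s z * r1 z) μ :=
    aux_int hsr1m.aestronglyMeasurable hsr1b
  have hsr1intν : Integrable (fun z => s z * r1 z) ν :=
    aux_int hsr1m.aestronglyMeasurable hsr1b
  have hsr2intν : Integrable (fun z => s z * r2 z) ν :=
    aux_int hsr2m.aestronglyMeasurable hsr2b
  have hspintμ : Integrable (fun z => s z * p z) μ :=
    aux_int hspm'.aestronglyMeasurable hspb
  have hspintν : Integrable (fun z => s z * p z) ν :=
    aux_int hspm'.aestronglyMeasurable hspb
  -- integrability of the composed bounded functions on the product space
  have hφsndintμ : Integrable (fun z : ℝ × 𝒴 => φ z.2) μ :=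
    aux_int (hφm.comp measurable_snd).aestronglyMeasurable fun z => habs_ab _ (hφab z.2)
  have hψsndintν : Integrable (fun z : ℝ × 𝒴 => ψ z.2) ν :=
    aux_int (hψm.comp measurable_snd).aestronglyMeasurable fun z => habs_ab _ (hψab z.2)
  have hclfstintμ : Integrable (fun z : ℝ × 𝒴 => clamp z.1) μ :=
    aux_int (hclampm.comp measurable_fst).aestronglyMeasurable fun z => habs_ab _ (hclampab z.1)
  have hclfstintν : Integrable (fun z : ℝ × 𝒴 => clamp z.1) ν :=
    aux_int (hclampm.comp measurable_fst).aestronglyMeasurable fun z => habs_ab _ (hclampab z.1)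
  -- set-integral identities with the constant subtracted
  have hsetμ : ∀ B : Set 𝒴, MeasurableSet B →
      ∫ z in Prod.snd ⁻¹' B, r1 z ∂μ = ∫ z in Prod.snd ⁻¹' B, p z ∂μ := by
    intro B hB
    have hconst : IntegrableOn (fun _ : ℝ × 𝒴 => c₀) (Prod.snd ⁻¹' B) μ :=
      integrableOn_const (measure_ne_top μ _)
    calc ∫ z in Prod.snd ⁻¹' B, r1 z ∂μ
        = (∫ z in Prod.snd ⁻¹' B, φ z.2 ∂μ) - ∫ _z in Prod.snd ⁻¹' B, c₀ ∂μ :=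
          integral_sub hφsndintμ.integrableOn hconst
      _ = (∫ z in Prod.snd ⁻¹' B, clamp z.1 ∂μ) - ∫ _z in Prod.snd ⁻¹' B, c₀ ∂μ := by
          rw [hPμ B hB]
      _ = ∫ z in Prod.snd ⁻¹' B, p z ∂μ :=
          (integral_sub hclfstintμ.integrableOn hconst).symm
  have hsetν : ∀ B : Set 𝒴, MeasurableSet B →
      ∫ z in Prod.snd ⁻¹' B, r2 z ∂ν = ∫ z in Prod.snd ⁻¹' B, p z ∂ν := by
    intro B hB
    have hconst : IntegrableOn (fun _ : ℝ × 𝒴 => c₀) (Prod.snd ⁻¹' B) ν :=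
      integrableOn_const (measure_ne_top ν _)
    calc ∫ z in Prod.snd ⁻¹' B, r2 z ∂ν
        = (∫ z in Prod.snd ⁻¹' B, ψ z.2 ∂ν) - ∫ _z in Prod.snd ⁻¹' B, c₀ ∂ν :=
          integral_sub hψsndintν.integrableOn hconst
      _ = (∫ z in Prod.snd ⁻¹' B, clamp z.1 ∂ν) - ∫ _z in Prod.snd ⁻¹' B, c₀ ∂ν := by
          rw [hPν B hB]
      _ = ∫ z in Prod.snd ⁻¹' B, p z ∂ν :=
          (integral_sub hclfstintν.integrableOn hconst).symm
  -- the two exchange identities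
  have hHμ : ∫ z, s z * r1 z ∂μ = ∫ z, s z * p z ∂μ := by
    rw [split_int μ hr1intμ hS hs1 hs2, split_int μ hpintμ hS hs1 hs2,
      hSdef, ← Set.preimage_compl, hsetμ A hA, hsetμ Aᶜ hA.compl]
  have hHν : ∫ z, s z * r2 z ∂ν = ∫ z, s z * p z ∂ν := by
    rw [split_int ν hr2intν hS hs1 hs2, split_int ν hpintν hS hs1 hs2,
      hSdef, ← Set.preimage_compl, hsetν A hA, hsetν Aᶜ hA.compl]
  -- the three TV bounds
  have E1 : |(∫ z, q1 z ∂μ) - ∫ z, q1 z ∂ν| ≤ 2 * ((b - a) / 2) * D :=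
    tv_integral_bound μ ν hq1m (by linarith) hq1b
  have E2 : |(∫ z, s z * r1 z ∂μ) - ∫ z, s z * r1 z ∂ν| ≤ 2 * ((b - a) / 2) * D :=
    tv_integral_bound μ ν hsr1m (by linarith) hsr1b
  have E3 : |(∫ z, s z * p z ∂μ) - ∫ z, s z * p z ∂ν| ≤ 2 * ((b - a) / 2) * D :=
    tv_integral_bound μ ν hspm' (by linarith) hspb
  -- pointwise comparison
  have hpt : ∀ z, |q1 z - q2 z| ≤ s z * (r1 z - r2 z) := fun z => by
    have h1 : q1 z - q2 z = h (φ z.2) - h (ψ z.2) := by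
      show (h (φ z.2) - h c₀) - (h (ψ z.2) - h c₀) = _; ring
    have h2 : r1 z - r2 z = φ z.2 - ψ z.2 := by
      show (φ z.2 - c₀) - (ψ z.2 - c₀) = _; ring
    rw [h1, h2]
    by_cases hz : z ∈ S
    · rw [hs1 z hz, one_mul]
      have hz' : ψ z.2 ≤ φ z.2 := hz
      exact le_trans (hLipAbs _ _) (le_of_eq (abs_of_nonneg (by linarith)))
    · rw [hs2 z hz]
      have hz' : ¬ (ψ z.2 ≤ φ z.2) := hz
      have hz'' : φ z.2 < ψ z.2 := not_le.mp hz'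
      refine le_trans (hLipAbs _ _) ?_
      rw [abs_of_neg (by linarith)]; ring_nf; exact le_refl _
  -- the second main estimate
  have hmain2 : |∫ z, (q1 z - q2 z) ∂ν| ≤ 2 * (2 * ((b - a) / 2) * D) := by
    have hprod_eq : (fun z => s z * (r1 z - r2 z)) = fun z => s z * r1 z - s z * r2 z :=
      funext fun z => by ring
    have step1 : |∫ z, (q1 z - q2 z) ∂ν| ≤ ∫ z, |q1 z - q2 z| ∂ν := by
      simpa [Real.norm_eq_abs] using
        norm_integral_le_integral_norm (μ := ν) (f := fun z => q1 z - q2 z)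
    have hsrint : Integrable (fun z => s z * (r1 z - r2 z)) ν := by
      rw [hprod_eq]; exact hsr1intν.sub hsr2intν
    have step2 : ∫ z, |q1 z - q2 z| ∂ν ≤ ∫ z, s z * (r1 z - r2 z) ∂ν :=
      integral_mono (hq1intν.sub hq2intν).abs hsrint hpt
    have step3 : ∫ z, s z * (r1 z - r2 z) ∂ν
        = (∫ z, s z * r1 z ∂ν) - ∫ z, s z * r2 z ∂ν := by
      rw [hprod_eq, integral_sub hsr1intν hsr2intν]
    have key : ∫ z, s z * (r1 z - r2 z) ∂ν
        = ((∫ z, s z * r1 z ∂ν) - ∫ z, s z * r1 z ∂μ)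
          + ((∫ z, s z * p z ∂μ) - ∫ z, s z * p z ∂ν) := by
      rw [step3, hHν, ← hHμ]; ring
    have habs2 : ∫ z, s z * (r1 z - r2 z) ∂ν
        ≤ 2 * ((b - a) / 2) * D + 2 * ((b - a) / 2) * D := by
      rw [key]
      have b2 := abs_le.1 E2
      have b3 := abs_le.1 E3
      linarith [b2.1, b2.2, b3.1, b3.2]
    have hnn : (0:ℝ) ≤ |∫ z, (q1 z - q2 z) ∂ν| := abs_nonneg _
    calc |∫ z, (q1 z - q2 z) ∂ν| ≤ ∫ z, |q1 z - q2 z| ∂ν := step1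
      _ ≤ ∫ z, s z * (r1 z - r2 z) ∂ν := step2
      _ ≤ 2 * ((b - a) / 2) * D + 2 * ((b - a) / 2) * D := habs2
      _ = 2 * (2 * ((b - a) / 2) * D) := by ring
  -- assemble
  rw [hI1, hI2]
  have hIq1 : ∫ z : ℝ × 𝒴, h (φ z.2) ∂μ = (∫ z, q1 z ∂μ) + h c₀ := by
    have e : (fun z : ℝ × 𝒴 => h (φ z.2)) = fun z => q1 z + h c₀ :=
      funext fun z => by show h (φ z.2) = (h (φ z.2) - h c₀) + h c₀; ring
    rw [e, integral_add hq1intμ (integrable_const _), integral_const]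
    simp
  have hIq2 : ∫ z : ℝ × 𝒴, h (ψ z.2) ∂ν = (∫ z, q2 z ∂ν) + h c₀ := by
    have e : (fun z : ℝ × 𝒴 => h (ψ z.2)) = fun z => q2 z + h c₀ :=
      funext fun z => by show h (ψ z.2) = (h (ψ z.2) - h c₀) + h c₀; ring
    rw [e, integral_add hq2intν (integrable_const _), integral_const]
    simp
  rw [hIq1, hIq2]
  have hsub : ∫ z, (q1 z - q2 z) ∂ν = (∫ z, q1 z ∂ν) - ∫ z, q2 z ∂ν :=
    integral_sub hq1intν hq2intν
  have edecomp : ((∫ z, q1 z ∂μ) + h c₀) - ((∫ z, q2 z ∂ν) + h c₀)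
      = ((∫ z, q1 z ∂μ) - ∫ z, q1 z ∂ν) + ((∫ z, q1 z ∂ν) - ∫ z, q2 z ∂ν) := by ring
  rw [edecomp]
  have habs := abs_add_le ((∫ z, q1 z ∂μ) - ∫ z, q1 z ∂ν) ((∫ z, q1 z ∂ν) - ∫ z, q2 z ∂ν)
  have hm2 : |(∫ z, q1 z ∂ν) - ∫ z, q2 z ∂ν| ≤ 2 * (2 * ((b - a) / 2) * D) := by
    rw [← hsub]; exact hmain2
  have hDle : D ≤ ε := htv
  have h3 : 3 * (b - a) * D ≤ 3 * (b - a) * ε :=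
    mul_le_mul_of_nonneg_left hDle (by linarith)
  nlinarith [habs, E1, hm2, h3]
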